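/- arXiv:0807.0314 — 3 statements merged into one kernel-verified Lean document; each statement's English description precedes it below -/
import Mathlib

section
/- Suppose (εₙ) is a sequence of nonzero real numbers with εₙ → 0, and for each n there is a T-periodic solution (αₙ, Aₙ) of the system with parameter ε = εₙ such that αₙ(t) − α₀(t) → c and Aₙ(t) → A₀ uniformly in t ∈ [0,T] for some constant c ∈ ℝ. Then M(−c/ω₀) = 0. In particular, if the subharmonic Melnikov function M has no zeroes, then no family of T-periodic solutions continuing the unperturbed solution exists. -/
open MeasureTheory intervalIntegral Real Filter

/-- Suppose `(εₙ)` is a sequence of nonzero real numbers with `εₙ → 0`,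
and for each `n` there is a `T`-periodic solution `(αₙ, Aₙ)` of the system with parameter
`ε = εₙ` such that `αₙ(t) − α₀(t) → c` and `Aₙ(t) → A₀` uniformly in `t ∈ [0,T]` for some
constant `c ∈ ℝ`.  Then `M(−c/ω₀) = 0`.  (In particular, if the subharmonic Melnikov
function `M` has no zeroes, then no family of `T`-periodic solutions continuing the
unperturbed solution exists.) -/
theorem melnikov_necessary_condition
    (W : Set ℝ) (hW : IsOpen W)
    (ω : ℝ → ℝ) (hω : AnalyticOnNhd ℝ ω W)
    (F G : ℝ → ℝ → ℝ → ℝ)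
    (hF : AnalyticOnNhd ℝ (fun x : ℝ × ℝ × ℝ => F x.1 x.2.1 x.2.2)
      {x : ℝ × ℝ × ℝ | x.2.1 ∈ W})
    (hG : AnalyticOnNhd ℝ (fun x : ℝ × ℝ × ℝ => G x.1 x.2.1 x.2.2)
      {x : ℝ × ℝ × ℝ | x.2.1 ∈ W})
    (hFα : ∀ α A t, F (α + 2 * π) A t = F α A t)
    (hFt : ∀ α A t, F α A (t + 2 * π) = F α A t)
    (hGα : ∀ α A t, G (α + 2 * π) A t = G α A t)
    (hGt : ∀ α A t, G α A (t + 2 * π) = G α A t)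
    (A₀ : ℝ) (hA₀ : A₀ ∈ W)
    (p q : ℤ) (hq : 1 ≤ q) (hp : p ≠ 0) (hpq : Int.gcd p q = 1)
    (hω₀ : ω A₀ = (p : ℝ) / (q : ℝ))
    (T : ℝ) (hT : T = 2 * π * (q : ℝ))
    (M : ℝ → ℝ)
    (hM : ∀ s : ℝ, M s = (1 / T) * ∫ t in (0:ℝ)..T, G (ω A₀ * t) A₀ (t + s))
    (εn : ℕ → ℝ) (hεn : ∀ n, εn n ≠ 0) (hεlim : Tendsto εn atTop (nhds 0))
    (αn An : ℕ → ℝ → ℝ) (c : ℝ)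
    (hrange : ∀ n t, An n t ∈ W)
    (hsolα : ∀ n, ∀ t : ℝ,
      HasDerivAt (αn n) (ω (An n t) + εn n * F (αn n t) (An n t) t) t)
    (hsolA : ∀ n, ∀ t : ℝ,
      HasDerivAt (An n) (εn n * G (αn n t) (An n t) t) t)
    (hperα : ∀ n, ∀ t : ℝ, αn n (t + T) = αn n t + 2 * π * (p : ℝ))
    (hperA : ∀ n, ∀ t : ℝ, An n (t + T) = An n t)
    (hconvα : TendstoUniformlyOn (fun n t => αn n t - ω A₀ * t) (fun _ => c)
      atTop (Set.Icc 0 T))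
    (hconvA : TendstoUniformlyOn (fun n t => An n t) (fun _ => A₀)
      atTop (Set.Icc 0 T)) :
    M (-c / ω A₀) = 0 := by
  classical
  -- basic positivity facts
  have hqpos : (0:ℝ) < (q:ℝ) := by exact_mod_cast (by omega : (0:ℤ) < q)
  have hTpos : 0 < T := by rw [hT]; positivity
  set ω₀ := ω A₀ with hω₀def
  have hω₀ne : ω₀ ≠ 0 := by
    rw [hω₀]
    exact div_ne_zero (Int.cast_ne_zero.mpr hp) (ne_of_gt hqpos)
  -- the open domain in ℝ³
  set U : Set (ℝ × ℝ × ℝ) := {x : ℝ × ℝ × ℝ | x.2.1 ∈ W} with hUdef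
  have hUopen : IsOpen U := hW.preimage (continuous_snd.fst)
  have hGcont : ∀ x ∈ U, ContinuousAt (fun x : ℝ × ℝ × ℝ => G x.1 x.2.1 x.2.2) x :=
    fun x hx => (hG x hx).continuousAt
  -- continuity of the solutions
  have hαcont : ∀ n, Continuous (αn n) :=
    fun n => continuous_iff_continuousAt.mpr fun t => (hsolα n t).continuousAt
  have hAcont : ∀ n, Continuous (An n) :=
    fun n => continuous_iff_continuousAt.mpr fun t => (hsolA n t).continuousAt
  have hgcont : ∀ n, Continuous (fun t => G (αn n t) (An n t) t) := by
    intro n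
    refine continuous_iff_continuousAt.mpr fun t => ?_
    have hcurve : ContinuousAt (fun t : ℝ => ((αn n t, An n t, t) : ℝ × ℝ × ℝ)) t :=
      ((hαcont n).continuousAt).prodMk (((hAcont n).continuousAt).prodMk continuousAt_id)
    exact ContinuousAt.comp (hGcont _ (hrange n t)) hcurve
  -- each periodic solution gives ∫₀ᵀ G(αₙ, Aₙ, t) dt = 0
  have hint0 : ∀ n, (∫ t in (0:ℝ)..T, G (αn n t) (An n t) t) = 0 := by
    intro n
    have hderiv : ∀ t ∈ Set.uIcc (0:ℝ) T,
        HasDerivAt (An n) (εn n * G (αn n t) (An n t) t) t := fun t _ => hsolA n t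
    have hii : IntervalIntegrable (fun t => εn n * G (αn n t) (An n t) t) volume 0 T :=
      (continuous_const.mul (hgcont n)).intervalIntegrable _ _
    have hfd := intervalIntegral.integral_eq_sub_of_hasDerivAt hderiv hii
    have hAT : An n T = An n 0 := by simpa using hperA n 0
    have h1 : εn n * ∫ t in (0:ℝ)..T, G (αn n t) (An n t) t = 0 := by
      rw [← intervalIntegral.integral_const_mul, hfd, hAT, sub_self]
    exact (mul_eq_zero.mp h1).resolve_left (hεn n)
  -- the limit curve and a compact neighbourhood
  set L : ℝ → ℝ × ℝ × ℝ := fun t => (ω₀ * t + c, A₀, t) with hLdef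
  have hLcont : Continuous L := by
    refine Continuous.prodMk ?_ (Continuous.prodMk continuous_const continuous_id)
    exact (continuous_const.mul continuous_id).add continuous_const
  have hK₀comp : IsCompact (L '' Set.Icc 0 T) := (isCompact_Icc).image hLcont
  have hK₀U : L '' Set.Icc 0 T ⊆ U := by
    rintro x ⟨t, _, rfl⟩; exact hA₀
  obtain ⟨δ, hδpos, hδ⟩ := hK₀comp.exists_cthickening_subset_open hUopen hK₀U
  set K : Set (ℝ × ℝ × ℝ) := Metric.cthickening δ (L '' Set.Icc 0 T) with hKdef
  have hKcomp : IsCompact K := hK₀comp.cthickening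
  obtain ⟨C, hC⟩ := hKcomp.exists_bound_of_continuousOn
    (f := fun x : ℝ × ℝ × ℝ => G x.1 x.2.1 x.2.2)
    (fun x hx => (hGcont x (hδ hx)).continuousWithinAt)
  -- eventual membership of the approximating curves in K
  have hmem : ∀ᶠ n in atTop, ∀ t ∈ Set.Icc (0:ℝ) T, ((αn n t, An n t, t) : ℝ × ℝ × ℝ) ∈ K := by
    have h1 := (Metric.tendstoUniformlyOn_iff.mp hconvα) δ hδpos
    have h2 := (Metric.tendstoUniformlyOn_iff.mp hconvA) δ hδpos
    filter_upwards [h1, h2] with n hn1 hn2 t ht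
    have hd1 : dist (αn n t) (ω₀ * t + c) < δ := by
      have h := hn1 t ht
      rw [Real.dist_eq] at h ⊢
      calc |αn n t - (ω₀ * t + c)| = |c - (αn n t - ω₀ * t)| := by
            rw [abs_sub_comm]; congr 1; ring
        _ < δ := h
    have hd2 : dist (An n t) A₀ < δ := by
      have h := hn2 t ht
      rw [dist_comm] at h; exact h
    refine Metric.mem_cthickening_of_dist_le _ (L t) δ _ ⟨t, ht, rfl⟩ ?_
    rw [Prod.dist_eq, Prod.dist_eq]
    simp only [hLdef, dist_self]
    exact le_trans (max_le hd1.le (max_le hd2.le hδpos.le)) le_rfl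
  -- dominated convergence
  have hIsub : Set.uIoc (0:ℝ) T ⊆ Set.Icc 0 T := by
    rw [Set.uIoc_of_le hTpos.le]; exact Set.Ioc_subset_Icc_self
  have hlim0 : (∫ t in (0:ℝ)..T, G (ω₀ * t + c) A₀ t) = 0 := by
    have hmeas : ∀ᶠ n in atTop, AEStronglyMeasurable (fun t => G (αn n t) (An n t) t)
        (volume.restrict (Set.uIoc (0:ℝ) T)) :=
      Eventually.of_forall fun n => (hgcont n).aestronglyMeasurable
    have hbd : ∀ᶠ n in atTop, ∀ᵐ t ∂(volume : Measure ℝ),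
        t ∈ Set.uIoc (0:ℝ) T → ‖G (αn n t) (An n t) t‖ ≤ C := by
      filter_upwards [hmem] with n hn
      exact ae_of_all _ fun t ht => hC _ (hn t (hIsub ht))
    have hptwise : ∀ᵐ t ∂(volume : Measure ℝ), t ∈ Set.uIoc (0:ℝ) T →
        Tendsto (fun n => G (αn n t) (An n t) t) atTop (nhds (G (ω₀ * t + c) A₀ t)) := by
      refine ae_of_all _ fun t ht => ?_
      have ht' : t ∈ Set.Icc (0:ℝ) T := hIsub ht
      have h1 : Tendsto (fun n => αn n t) atTop (nhds (ω₀ * t + c)) := by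
        have h := (hconvα.tendsto_at ht').add_const (ω₀ * t)
        have he : (fun n => αn n t - ω₀ * t + ω₀ * t) = fun n => αn n t := by
          funext n; ring
        rw [he] at h
        simpa [add_comm] using h
      have h2 : Tendsto (fun n => An n t) atTop (nhds A₀) := hconvA.tendsto_at ht'
      have hcurve : Tendsto (fun n => ((αn n t, An n t, t) : ℝ × ℝ × ℝ)) atTop
          (nhds (ω₀ * t + c, A₀, t)) :=
        h1.prodMk_nhds (h2.prodMk_nhds tendsto_const_nhds)
      exact ((hGcont (ω₀ * t + c, A₀, t) hA₀).tendsto).comp hcurve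
    have htendsto := intervalIntegral.tendsto_integral_filter_of_dominated_convergence
      (μ := volume) (F := fun n t => G (αn n t) (An n t) t)
      (f := fun t => G (ω₀ * t + c) A₀ t) (fun _ => C) hmeas hbd
      (intervalIntegrable_const) hptwise
    have h0 : Tendsto (fun _ : ℕ => (0:ℝ)) atTop
        (nhds (∫ t in (0:ℝ)..T, G (ω₀ * t + c) A₀ t)) := by
      simpa [hint0] using htendsto
    exact (tendsto_nhds_unique h0 tendsto_const_nhds)
  -- periodicity lemmas
  have hGα' : ∀ (k : ℤ) (α A t : ℝ), G (α + (k:ℝ) * (2 * π)) A t = G α A t := by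
    intro k α A t
    have hp' : Function.Periodic (fun α => G α A t) (2 * π) := fun x => hGα x A t
    exact (hp'.int_mul k) α
  have hGt' : ∀ (k : ℤ) (α A t : ℝ), G α A (t + (k:ℝ) * (2 * π)) = G α A t := by
    intro k α A t
    have hp' : Function.Periodic (fun t => G α A t) (2 * π) := fun x => hGt α A x
    exact (hp'.int_mul k) t
  have hωT : ω₀ * T = (p:ℝ) * (2 * π) := by
    rw [hω₀, hT]; field_simp
  have hper : Function.Periodic (fun u => G (ω₀ * u + c) A₀ u) T := by
    intro u
    have e1 : ω₀ * (u + T) + c = (ω₀ * u + c) + (p:ℝ) * (2 * π) := by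
      rw [mul_add, hωT]; ring
    have e2 : u + T = u + (q:ℝ) * (2 * π) := by rw [hT]; ring
    have step1 : ∀ a, G a A₀ (u + T) = G a A₀ u := fun a => by
      rw [e2]; exact hGt' q a A₀ u
    show G (ω₀ * (u + T) + c) A₀ (u + T) = G (ω₀ * u + c) A₀ u
    rw [step1, e1]
    exact hGα' p (ω₀ * u + c) A₀ u
  -- final computation
  have hs : ∀ t : ℝ, G (ω₀ * t) A₀ (t + (-c / ω₀))
      = (fun u => G (ω₀ * u + c) A₀ u) (t + (-c / ω₀)) := by
    intro t
    simp only
    congr 1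
    have : ω₀ * (-c / ω₀) = -c := by field_simp [mul_comm]
    rw [mul_add, this]; ring
  rw [hM, intervalIntegral.integral_congr (g := fun t => (fun u => G (ω₀ * u + c) A₀ u) (t + (-c / ω₀))) (fun t _ => hs t)]
  rw [intervalIntegral.integral_comp_add_right (fun u => G (ω₀ * u + c) A₀ u) (-c / ω₀)]
  have hint_eq : (∫ u in ((0:ℝ) + (-c / ω₀))..(T + (-c / ω₀)), G (ω₀ * u + c) A₀ u)
      = ∫ u in (0:ℝ)..T, G (ω₀ * u + c) A₀ u := by
    have := hper.intervalIntegral_add_eq ((0:ℝ) + (-c / ω₀)) 0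
    rw [show (0:ℝ) + (-c / ω₀) + T = T + (-c / ω₀) by ring] at this
    rw [this, zero_add]
  rw [hint_eq, hlim0, mul_zero]
end

section
/- Let 𝔥 and 𝔭 be coprime positive integers, set μ = 𝔥/𝔭 ∈ ℚ, and let 𝔯 ∈ ℚ. Let P(c) = Σ_{j=0}^{d} Q_j cʲ ∈ ℝ[c] be a polynomial of degree d ≥ 1 (so Q_d ≠ 0) whose support lies on the line k + μ j = 𝔯, i.e. for every j with Q_j ≠ 0 there exists a natural number k with k + μ j = 𝔯. If P(c) = R (c − c₀)^d for some R ≠ 0 and some c₀ ≠ 0 (that is, P has a root of multiplicity equal to its degree at a nonzero point), then μ is a positive integer, i.e. 𝔭 = 1. -/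
/-- Lemma 6 of the paper. Let `𝔥` and `𝔭` be coprime positive integers,
set `μ = 𝔥/𝔭 ∈ ℚ`, and let `𝔯 ∈ ℚ`. Let `P(c) ∈ ℝ[c]` be a polynomial of degree `d ≥ 1`
whose support lies on the line `k + μ j = 𝔯`, i.e. for every `j` with `P.coeff j ≠ 0` there is
a natural number `k` with `k + μ j = 𝔯`. If `P(c) = R (c - c₀)^d` for some `R ≠ 0` and
some `c₀ ≠ 0`, then `μ` is a positive integer, i.e. `𝔭 = 1`. -/
theorem slope_integer_of_full_multiplicity
    (𝔥 𝔭 : ℕ) (h𝔥 : 0 < 𝔥) (h𝔭 : 0 < 𝔭) (hcop : Nat.Coprime 𝔥 𝔭)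
    (μ : ℚ) (hμ : μ = (𝔥 : ℚ) / (𝔭 : ℚ)) (𝔯 : ℚ)
    (P : Polynomial ℝ) (d : ℕ) (hd : d = P.natDegree) (hd1 : 1 ≤ d)
    (hsupp : ∀ j : ℕ, P.coeff j ≠ 0 → ∃ k : ℕ, (k : ℚ) + μ * (j : ℚ) = 𝔯)
    (R c₀ : ℝ) (hR : R ≠ 0) (hc₀ : c₀ ≠ 0)
    (hP : P = Polynomial.C R * (Polynomial.X - Polynomial.C c₀) ^ d) :
    𝔭 = 1 := by
  -- coeff 0 nonzero
  have h0 : P.coeff 0 ≠ 0 := by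
    rw [hP, Polynomial.coeff_zero_eq_eval_zero]
    simp only [Polynomial.eval_mul, Polynomial.eval_pow, Polynomial.eval_sub,
      Polynomial.eval_X, Polynomial.eval_C, zero_sub]
    exact mul_ne_zero hR (pow_ne_zero _ (neg_ne_zero.2 hc₀))
  -- coeff 1 nonzero
  have h1 : P.coeff 1 ≠ 0 := by
    have hder : (Polynomial.derivative P).coeff 0 = P.coeff 1 := by
      simp [Polynomial.coeff_derivative]
    have hD : Polynomial.derivative P
        = Polynomial.C R * (Polynomial.C (d : ℝ) * (Polynomial.X - Polynomial.C c₀) ^ (d - 1)) := by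
      rw [hP, Polynomial.derivative_C_mul, Polynomial.derivative_X_sub_C_pow]
    have : (Polynomial.derivative P).coeff 0 ≠ 0 := by
      rw [hD, Polynomial.coeff_zero_eq_eval_zero]
      simp only [Polynomial.eval_mul, Polynomial.eval_pow, Polynomial.eval_sub,
        Polynomial.eval_X, Polynomial.eval_C, zero_sub]
      refine mul_ne_zero hR (mul_ne_zero ?_ (pow_ne_zero _ (neg_ne_zero.2 hc₀)))
      exact Nat.cast_ne_zero.2 (by omega)
    rwa [hder] at this
  obtain ⟨k₀, hk₀⟩ := hsupp 0 h0
  obtain ⟨k₁, hk₁⟩ := hsupp 1 h1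
  simp only [Nat.cast_zero, mul_zero, add_zero] at hk₀
  simp only [Nat.cast_one, mul_one] at hk₁
  have hμval : μ = (k₀ : ℚ) - (k₁ : ℚ) := by linarith
  have hμpos : 0 < μ := by
    rw [hμ]
    positivity
  have hk : (k₁ : ℚ) < (k₀ : ℚ) := by linarith
  have hk' : k₁ < k₀ := by exact_mod_cast hk
  have hmain : (𝔥 : ℚ) = ((k₀ - k₁ : ℕ) : ℚ) * (𝔭 : ℚ) := by
    have h𝔭' : (𝔭 : ℚ) ≠ 0 := Nat.cast_ne_zero.2 h𝔭.ne'
    push_cast [Nat.cast_sub hk'.le]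
    rw [hμ] at hμval
    field_simp at hμval
    linarith
  have hdvd : 𝔭 ∣ 𝔥 := ⟨k₀ - k₁, by exact_mod_cast hmain.trans (mul_comm _ _)⟩
  exact Nat.Coprime.eq_one_of_dvd hcop.symm hdvd
end

section
/- Consider finite rooted trees in which every vertex is either a node or a leaf, leaves have no children, the root is a node, and every node v carries a label b_v ∈ {0,1} subject to the constraint: every node with b_v = 0 has at least two children, none of which is a leaf. For such a tree θ, let k(θ) be the number of nodes with label b = 1 and j(θ) the number of leaves. Then the total number of vertices satisfies |V(θ)| ≤ 2 k(θ) + j(θ) − 1. -/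
/-- A finite rooted tree in which every vertex is either a node (carrying a badge label
`b ∈ {0,1}`, encoded as a `Bool`) or a leaf, and leaves have no children. -/
inductive BadgeTree : Type
  | leaf : BadgeTree
  | node : Bool → List BadgeTree → BadgeTree

namespace BadgeTree

/-- Total number of vertices of the tree. -/
def numVertices : BadgeTree → ℕ
  | .leaf => 1
  | .node _ ts => 1 + (ts.attach.map fun t => numVertices t.1).sum
  decreasing_by simp_wf; have := List.sizeOf_lt_of_mem t.2; omega

/-- Number of leaves of the tree. -/
def numLeaves : BadgeTree → ℕ
  | .leaf => 1
  | .node _ ts => (ts.attach.map fun t => numLeaves t.1).sum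
  decreasing_by simp_wf; have := List.sizeOf_lt_of_mem t.2; omega

/-- The order `k(θ)`: the number of nodes with badge label `b = 1` (`true`). -/
def order : BadgeTree → ℕ
  | .leaf => 0
  | .node b ts => (if b then 1 else 0) + (ts.attach.map fun t => order t.1).sum
  decreasing_by simp_wf; have := List.sizeOf_lt_of_mem t.2; omega

/-- The admissibility constraint: every node with badge label `b = 0` (`false`) has at
least two children, none of which is a leaf. -/
inductive Valid : BadgeTree → Prop
  | leaf : Valid .leaf
  | node (b : Bool) (ts : List BadgeTree)
      (hb : b = false → 2 ≤ ts.length ∧ ∀ t ∈ ts, t ≠ BadgeTree.leaf)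
      (hts : ∀ t ∈ ts, Valid t) : Valid (.node b ts)

end BadgeTree

namespace BadgeTree

/-- Indicator of being a leaf. -/
def isLeafN : BadgeTree → ℕ
  | .leaf => 1
  | .node _ _ => 0

lemma sum_ineq (ts : List BadgeTree)
    (h : ∀ t ∈ ts, t.numVertices + 1 ≤ 2 * t.order + t.numLeaves +
        BadgeTree.isLeafN t) :
    (ts.map numVertices).sum + ts.length ≤
      2 * (ts.map order).sum + (ts.map numLeaves).sum +
        (ts.map BadgeTree.isLeafN).sum := by
  induction ts with
  | nil => simp
  | cons a l ih =>
    have ha := h a (by simp)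
    have hl := ih (fun t ht => h t (by simp [ht]))
    simp only [List.map_cons, List.sum_cons, List.length_cons]
    omega

lemma ite_sum_le_length (ts : List BadgeTree) :
    (ts.map BadgeTree.isLeafN).sum ≤ ts.length := by
  induction ts with
  | nil => simp
  | cons a l ih =>
    simp only [List.map_cons, List.sum_cons, List.length_cons]
    cases a <;> simp [isLeafN] <;> omega

lemma aux : ∀ (n : ℕ) (t : BadgeTree), sizeOf t ≤ n → t.Valid →
    t.numVertices + 1 ≤ 2 * t.order + t.numLeaves +
      BadgeTree.isLeafN t := by
  intro n
  induction n with
  | zero => intro t ht; cases t <;> simp at ht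
  | succ n ih =>
    intro t ht hv
    cases t with
    | leaf => simp [numVertices, numLeaves, order, isLeafN]
    | node b ts =>
      cases hv with
      | node _ _ hb hts =>
        rw [numVertices, numLeaves, order]
        have hmaps : ∀ f : BadgeTree → ℕ,
            (ts.attach.map fun t => f t.1).sum = (ts.map f).sum := by
          intro f
          congr 1
          exact List.attach_map_val
        rw [hmaps, hmaps, hmaps]
        have hchild := sum_ineq ts (fun t htmem => by
          apply ih t _ (hts t htmem)
          have := List.sizeOf_lt_of_mem htmem
          simp only [node.sizeOf_spec] at ht
          omega)
        have hlen := ite_sum_le_length ts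
        cases b with
        | false =>
          have hb' := hb rfl
          have hzero : (ts.map BadgeTree.isLeafN).sum = 0 := by
            rw [List.sum_eq_zero]
            intro x hx
            simp only [List.mem_map] at hx
            obtain ⟨t, htm, rfl⟩ := hx
            cases t with
            | leaf => exact absurd rfl (hb'.2 _ htm)
            | node b' ts' => rfl
          have := hb'.1
          simp only [isLeafN]
          omega
        | true =>
          simp only [isLeafN, if_pos rfl, eq_self_iff_true, if_true]
          omega

end BadgeTree

/-- Lemma 10 of the paper.  For every finite rooted tree `θ` as above
whose root is a node and which satisfies the constraint that every node with badge label
`0` has at least two children, none of which is a leaf, the total number of vertices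
satisfies `|V(θ)| ≤ 2 k(θ) + j(θ) − 1`, where `k(θ)` is the number of nodes with badge
label `1` and `j(θ)` is the number of leaves. -/
theorem badgeTree_vertex_bound (b : Bool) (ts : List BadgeTree)
    (hvalid : BadgeTree.Valid (BadgeTree.node b ts)) :
    ((BadgeTree.node b ts).numVertices : ℤ) ≤
      2 * ((BadgeTree.node b ts).order : ℤ) + ((BadgeTree.node b ts).numLeaves : ℤ) - 1 := by
  have h := BadgeTree.aux (sizeOf (BadgeTree.node b ts)) _ le_rfl hvalid
  simp only [BadgeTree.isLeafN] at h
  omega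
end
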